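/- Let (K, v) be a valued field and let L/K be a finite normal extension of degree n. Assume 𝒪_x is the unique valuation subring of L extending 𝒪_v. Then for every a ∈ L^* one has x(a)^n = x(N_{L/K}(a)) in the value group of x, where N_{L/K}(a) ∈ K^* is the field norm; consequently n·Δ_x ⊆ Δ_v, i.e. for every a ∈ L^* there exists b ∈ K^* with a^n·b^{-1} ∈ 𝒪_x^×. -/

import Mathlib

open IntermediateField Polynomial

private theorem norm_tower_aux {K F L : Type*} [Field K] [Field F] [Field L]
    [Algebra K F] [Algebra F L] [Algebra K L] [IsScalarTower K F L]
    [FiniteDimensional K F] [FiniteDimensional F L] (z : F) :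
    Algebra.norm K (algebraMap F L z) = Algebra.norm K z ^ Module.finrank F L := by
  let b1 := Module.finBasis K F
  let b2 := Module.finBasis F L
  rw [Algebra.norm_eq_matrix_det (b1.smulTower b2), Algebra.smulTower_leftMulMatrix_algebraMap,
    Matrix.det_blockDiagonal, Algebra.norm_eq_matrix_det b1]
  simp

theorem stmt_10 {K L : Type*} [Field K] [Field L] [Algebra K L] [Normal K L]
    [FiniteDimensional K L] (v : ValuationSubring K) (x : ValuationSubring L)
    (hx : x.comap (algebraMap K L) = v)
    (huniq : ∀ y : ValuationSubring L, y.comap (algebraMap K L) = v → y = x) :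
    (∀ a : L, a ≠ 0 →
      x.valuation a ^ Module.finrank K L =
        x.valuation (algebraMap K L (Algebra.norm K a))) ∧
    ∀ a : L, a ≠ 0 → ∃ b : K, b ≠ 0 ∧
      a ^ Module.finrank K L / algebraMap K L b ∈ x ∧
      (a ^ Module.finrank K L / algebraMap K L b)⁻¹ ∈ x := by
  -- membership in `x` is invariant under `K`-automorphisms
  have hmem : ∀ σ : L ≃ₐ[K] L, ∀ z : L, z ∈ x ↔ σ z ∈ x := by
    intro σ z
    have h : x.comap (σ : L →+* L) = x := by
      apply huniq
      rw [← hx]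
      ext k
      simp [ValuationSubring.mem_comap]
    conv_lhs => rw [← h]
    simp [ValuationSubring.mem_comap]
  -- valuation inequalities are preserved by automorphisms
  have hle : ∀ σ : L ≃ₐ[K] L, ∀ z w : L,
      x.valuation z ≤ x.valuation w → x.valuation (σ z) ≤ x.valuation (σ w) := by
    intro σ z w h
    rw [ValuationSubring.valuation_le_iff] at h ⊢
    obtain ⟨c, hc⟩ := h
    exact ⟨⟨σ c, (hmem σ c.1).1 c.2⟩, by
      simpa only [← map_mul] using congrArg σ hc⟩
  have hiff : ∀ σ : L ≃ₐ[K] L, ∀ z w : L,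
      x.valuation (σ z) ≤ x.valuation (σ w) ↔ x.valuation z ≤ x.valuation w := by
    intro σ z w
    refine ⟨fun h => ?_, hle σ z w⟩
    have := hle σ.symm _ _ h
    simpa using this
  have hlt : ∀ σ : L ≃ₐ[K] L, ∀ z w : L,
      x.valuation (σ z) < x.valuation (σ w) ↔ x.valuation z < x.valuation w := by
    intro σ z w
    simp only [lt_iff_le_not_ge, hiff]
  -- valuation values are invariant under automorphisms
  have key : ∀ σ : L ≃ₐ[K] L, ∀ z : L, ¬ x.valuation (σ z) < x.valuation z := by
    intro σ z h
    have hchain : ∀ k : ℕ, x.valuation ((σ ^ (k + 1)) z) < x.valuation z := by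
      intro k
      induction k with
      | zero => simpa using h
      | succ k ih =>
        have h2 : x.valuation (σ ((σ ^ (k + 1)) z)) < x.valuation (σ z) := (hlt σ _ _).2 ih
        have h3 : σ ((σ ^ (k + 1)) z) = (σ ^ (k + 2)) z := by
          rw [← AlgEquiv.mul_apply, ← pow_succ']
        rw [h3] at h2
        exact h2.trans h
    have hpos : 0 < orderOf σ := orderOf_pos σ
    have := hchain (orderOf σ - 1)
    rw [Nat.sub_add_cancel hpos, pow_orderOf_eq_one] at this
    simp at this
  have heq : ∀ σ : L ≃ₐ[K] L, ∀ z : L, x.valuation (σ z) = x.valuation z := by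
    intro σ z
    refine le_antisymm (not_lt.1 ?_) (not_lt.1 (key σ z))
    have := key σ.symm (σ z)
    simpa using this
  -- the main computation
  have main : ∀ a : L, a ≠ 0 →
      x.valuation a ^ Module.finrank K L =
        x.valuation (algebraMap K L (Algebra.norm K a)) := by
    intro a _
    have hint : IsIntegral K a := IsIntegral.of_finite K a
    haveI : FiniteDimensional (↥K⟮a⟯) L := FiniteDimensional.right K (↥K⟮a⟯) L
    set m := Module.finrank (↥K⟮a⟯) L with hm
    set d := (minpoly K a).natDegree with hd
    -- norm in terms of the minimal polynomial
    have hnorm1 : Algebra.norm K a =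
        Algebra.norm K (AdjoinSimple.gen K a) ^ m := by
      have := norm_tower_aux (K := K) (F := ↥K⟮a⟯) (L := L) (AdjoinSimple.gen K a)
      rwa [AdjoinSimple.algebraMap_gen] at this
    have hnorm2 : Algebra.norm K (AdjoinSimple.gen K a) =
        (-1) ^ d * (minpoly K a).coeff 0 := by
      simpa [IntermediateField.adjoin.powerBasis_gen, minpoly_gen K a,
        IntermediateField.adjoin.powerBasis_dim] using
        Algebra.PowerBasis.norm_gen_eq_coeff_zero_minpoly (IntermediateField.adjoin.powerBasis hint)
    -- the minimal polynomial splits in L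
    set p := (minpoly K a).map (algebraMap K L) with hp
    have hmono : p.Monic := (minpoly.monic hint).map _
    have hsplits : p.Splits :=
      Normal.splits ‹Normal K L› a
    have hcoeff : p.coeff 0 = (-1) ^ d * p.roots.prod := by
      have := hsplits.coeff_zero_eq_prod_roots_of_monic hmono
      rwa [hp, (minpoly.monic hint).natDegree_map] at this
    have hcard : p.roots.card = d := by
      have := hsplits.natDegree_eq_card_roots.symm
      rwa [hp, (minpoly.monic hint).natDegree_map] at this
    -- each root has the same valuation as `a`
    have hroot : ∀ r ∈ p.roots, x.valuation r = x.valuation a := by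
      intro r hr
      have hev : (Polynomial.aeval r) (minpoly K a) = 0 := by
        have := isRoot_of_mem_roots hr
        rwa [IsRoot, eval_map, ← aeval_def] at this
      obtain ⟨σ, hσ⟩ := minpoly.exists_algEquiv_of_root' hint.isAlgebraic hev
      rw [← hσ, heq]
    -- put everything together
    have hval : x.valuation (algebraMap K L (Algebra.norm K a)) =
        (x.valuation a) ^ (d * m) := by
      have halg : (algebraMap K L) ((-1) ^ d * (minpoly K a).coeff 0) = (-1) ^ d * p.coeff 0 := by
        rw [map_mul, map_pow, map_neg, map_one, hp, coeff_map]
      rw [hnorm1, map_pow, hnorm2, halg, hcoeff, ← mul_assoc, ← mul_pow, neg_one_mul, neg_neg,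
        one_pow, one_mul, map_pow, pow_mul]
      congr 1
      rw [map_multiset_prod, Multiset.map_congr rfl hroot, Multiset.map_const',
        Multiset.prod_replicate, hcard]
    have hrank : d * m = Module.finrank K L := by
      rw [hd, hm, ← IntermediateField.adjoin.finrank hint]
      exact Module.finrank_mul_finrank K (↥K⟮a⟯) L
    rw [hval, hrank]
  refine ⟨main, fun a ha => ?_⟩
  refine ⟨Algebra.norm K a, ?_, ?_, ?_⟩
  · exact (Algebra.norm_ne_zero_iff).2 ha
  all_goals {
    have hb : (algebraMap K L) (Algebra.norm K a) ≠ 0 := by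
      simpa using (Algebra.norm_ne_zero_iff (R := K)).2 ha
    have hvb : x.valuation ((algebraMap K L) (Algebra.norm K a)) ≠ 0 := by
      simpa using hb
    have h1 : x.valuation (a ^ Module.finrank K L / algebraMap K L (Algebra.norm K a)) = 1 := by
      rw [map_div₀, map_pow, main a ha, div_self hvb]
    first
    | exact x.mem_of_valuation_le_one _ (le_of_eq h1)
    | { refine x.mem_of_valuation_le_one _ ?_
        rw [map_inv₀, h1, inv_one] }
  }
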